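/- Let n ≥ 2 and let k, i, j satisfy 1 ≤ k < i < j ≤ n. Set τ = s_{k+1} ⋯ s_{j−1} ∘ s_k ∘ s_{k+1} ⋯ s_{i−1} ∈ S_n (equal to τ^{n,k}_{i,j}). Then for every m with i ≤ m ≤ j−1, the bigrassmannian element u_m = s_k s_{k+1} ⋯ s_m satisfies u_m ≤_B s_k ∘ τ and ¬(u_m ≤_B τ). -/
import Mathlib


/-- The adjacent transposition `s_l = (l, l+1)` (0-indexed), interpreted as the
identity out of range. -/
def sT (n l : ℕ) : Equiv.Perm (Fin n) :=
  if h : l + 1 < n then Equiv.swap ⟨l, Nat.lt_of_succ_lt h⟩ ⟨l + 1, h⟩ else 1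

/-- The product `s_a s_{a+1} ⋯ s_b`, composed right to left (identity if `b < a`). -/
def ascProd (n a b : ℕ) : Equiv.Perm (Fin n) :=
  ((List.range' a (b + 1 - a)).map (sT n)).prod

/-- The Bruhat order on `S_n` via the rank-matrix criterion:
`u ≤_B w` iff for all `p q`, `#{i ≤ p : u i ≥ q} ≤ #{i ≤ p : w i ≥ q}`. -/
def bruhatLE {n : ℕ} (u w : Equiv.Perm (Fin n)) : Prop :=
  ∀ p q : Fin n,
    (Finset.univ.filter (fun i : Fin n => i ≤ p ∧ q ≤ u i)).card ≤
      (Finset.univ.filter (fun i : Fin n => i ≤ p ∧ q ≤ w i)).card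

lemma sT_apply (n l : ℕ) (h : l + 1 < n) (x : Fin n) :
    ((sT n l x : Fin n) : ℕ) = if (x : ℕ) = l then l + 1 else if (x : ℕ) = l + 1 then l else x := by
  rw [sT, dif_pos h]
  rcases eq_or_ne (x : ℕ) l with h1 | h1
  · have : x = (⟨l, Nat.lt_of_succ_lt h⟩ : Fin n) := by ext; simpa using h1
    subst this; simp [Equiv.swap_apply_left]
  rcases eq_or_ne (x : ℕ) (l+1) with h2 | h2
  · have : x = (⟨l+1, h⟩ : Fin n) := by ext; simpa using h2
    subst this
    simp [Equiv.swap_apply_right, h1]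
  · rw [Equiv.swap_apply_of_ne_of_ne]
    · simp [h1, h2]
    · intro hc; exact h1 (by simpa using congrArg Fin.val hc)
    · intro hc; exact h2 (by simpa using congrArg Fin.val hc)

lemma ascProd_nil (n a b : ℕ) (h : b + 1 ≤ a) : ascProd n a b = 1 := by
  unfold ascProd
  rw [Nat.sub_eq_zero_of_le h]
  simp

lemma ascProd_cons (n a b : ℕ) (h : a ≤ b) :
    ascProd n a b = sT n a * ascProd n (a+1) b := by
  unfold ascProd
  have h1 : b + 1 - a = (b + 1 - (a+1)) + 1 := by omega
  rw [h1, List.range'_succ]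
  simp

lemma ascProd_apply_aux (n b : ℕ) (hb : b + 1 < n) :
    ∀ d a, a ≤ b + 1 → b + 1 - a = d → ∀ x : Fin n,
      ((ascProd n a b x : Fin n) : ℕ) =
      if a ≤ (x:ℕ) ∧ (x:ℕ) ≤ b then (x:ℕ) + 1 else if (x:ℕ) = b + 1 then a else (x:ℕ) := by
  intro d
  induction d with
  | zero =>
    intro a ha hd x
    rw [ascProd_nil n a b (by omega)]
    simp only [Equiv.Perm.one_apply]
    split_ifs with h1 h2 <;> omega
  | succ d ih =>
    intro a ha hd x
    have hab' : a ≤ b := by omega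
    rw [ascProd_cons n a b hab', Equiv.Perm.mul_apply]
    have hx := ih (a+1) (by omega) (by omega) x
    rw [sT_apply n a (by omega) _, hx]
    split_ifs <;> omega

lemma ascProd_apply (n a b : ℕ) (hab : a ≤ b + 1) (hb : b + 1 < n) (x : Fin n) :
    ((ascProd n a b x : Fin n) : ℕ) =
      if a ≤ (x:ℕ) ∧ (x:ℕ) ≤ b then (x:ℕ) + 1 else if (x:ℕ) = b + 1 then a else (x:ℕ) :=
  ascProd_apply_aux n b hb _ a hab rfl x

lemma bruhat_key {n : ℕ} (u w : Equiv.Perm (Fin n)) (i j : Fin n) (hij : i < j)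
    (h : ∀ x : Fin n, x ≠ i → x ≠ j → ((u x : Fin n) : ℕ) ≤ ((w x : Fin n) : ℕ))
    (ha : ∀ q : Fin n, ((q:ℕ) ≤ u i) → ¬ ((q:ℕ) ≤ w i) →
      ∃ a : Fin n, a < i ∧ ((u a : Fin n) : ℕ) < q ∧ (q:ℕ) ≤ w a)
    (hb : ∀ q : Fin n, ((q:ℕ) ≤ u j) → ¬ ((q:ℕ) ≤ w j) →
      ∃ b : Fin n, i < b ∧ b < j ∧ ((u b : Fin n) : ℕ) < q ∧ (q:ℕ) ≤ w b) :
    bruhatLE u w := by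
  intro p q
  set Su := Finset.univ.filter (fun x : Fin n => x ≤ p ∧ q ≤ u x) with hSu
  set Sw := Finset.univ.filter (fun x : Fin n => x ≤ p ∧ q ≤ w x) with hSw
  have memSu : ∀ x : Fin n, x ∈ Su ↔ (x ≤ p ∧ (q:ℕ) ≤ u x) := by
    intro x; rw [hSu, Finset.mem_filter]
    simp only [Finset.mem_univ, true_and]
    rw [Fin.le_def (a := q)]
  have memSw : ∀ x : Fin n, x ∈ Sw ↔ (x ≤ p ∧ (q:ℕ) ≤ w x) := by
    intro x; rw [hSw, Finset.mem_filter]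
    simp only [Finset.mem_univ, true_and]
    rw [Fin.le_def (a := q)]
  by_cases hbi : i ≤ p ∧ (q:ℕ) ≤ u i ∧ ¬ (q:ℕ) ≤ w i
  · obtain ⟨a, hai, hua, hwa⟩ := ha q hbi.2.1 hbi.2.2
    have haSu : a ∉ Su := by rw [memSu]; push_neg; intro _; omega
    have haSw : a ∈ Sw := by rw [memSw]; exact ⟨le_trans hai.le hbi.1, hwa⟩
    have hiSu : i ∈ Su := by rw [memSu]; exact ⟨hbi.1, hbi.2.1⟩
    by_cases hbj : j ≤ p ∧ (q:ℕ) ≤ u j ∧ ¬ (q:ℕ) ≤ w j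
    · obtain ⟨b, hib, hbj', hub, hwb⟩ := hb q hbj.2.1 hbj.2.2
      have hbSu : b ∉ Su := by rw [memSu]; push_neg; intro _; omega
      have hbSw : b ∈ Sw := by rw [memSw]; exact ⟨le_trans hbj'.le hbj.1, hwb⟩
      have hjSu : j ∈ Su := by rw [memSu]; exact ⟨hbj.1, hbj.2.1⟩
      have hsub : insert a (insert b ((Su.erase i).erase j)) ⊆ Sw := by
        intro x hx
        rcases Finset.mem_insert.mp hx with rfl | hx
        · exact haSw
        rcases Finset.mem_insert.mp hx with rfl | hx
        · exact hbSw
        have hxj : x ≠ j := Finset.ne_of_mem_erase hx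
        have hxi : x ≠ i := Finset.ne_of_mem_erase (Finset.mem_of_mem_erase hx)
        have hxSu : x ∈ Su := Finset.mem_of_mem_erase (Finset.mem_of_mem_erase hx)
        rw [memSu] at hxSu
        rw [memSw]
        exact ⟨hxSu.1, le_trans hxSu.2 (h x hxi hxj)⟩
      have hcard := Finset.card_le_card hsub
      rw [Finset.card_insert_of_notMem, Finset.card_insert_of_notMem,
        Finset.card_erase_of_mem, Finset.card_erase_of_mem] at hcard
      · have h2 : 2 ≤ Su.card := by
          have : ({i, j} : Finset (Fin n)) ⊆ Su := by
            intro x hx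
            rcases Finset.mem_insert.mp hx with rfl | hx
            · exact hiSu
            · rw [Finset.mem_singleton] at hx; subst hx; exact hjSu
          have := Finset.card_le_card this
          rwa [Finset.card_insert_of_notMem (by simp [hij.ne]), Finset.card_singleton] at this
        omega
      · exact hiSu
      · exact Finset.mem_erase.mpr ⟨hij.ne', hjSu⟩
      · intro hc
        have := Finset.mem_of_mem_erase (Finset.mem_of_mem_erase hc)
        exact hbSu this
      · intro hc
        rcases Finset.mem_insert.mp hc with hcb | hc
        · exact absurd hcb (ne_of_lt (lt_trans hai hib))
        · exact haSu (Finset.mem_of_mem_erase (Finset.mem_of_mem_erase hc))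
    · -- only i bad
      have hsub : insert a (Su.erase i) ⊆ Sw := by
        intro x hx
        rcases Finset.mem_insert.mp hx with rfl | hx
        · exact haSw
        have hxi : x ≠ i := Finset.ne_of_mem_erase hx
        have hxSu : x ∈ Su := Finset.mem_of_mem_erase hx
        rw [memSu] at hxSu
        rw [memSw]
        refine ⟨hxSu.1, ?_⟩
        by_cases hxj : x = j
        · subst hxj
          by_contra hc
          exact hbj ⟨hxSu.1, hxSu.2, hc⟩
        · exact le_trans hxSu.2 (h x hxi hxj)
      have hcard := Finset.card_le_card hsub
      rw [Finset.card_insert_of_notMem (fun hc => haSu (Finset.mem_of_mem_erase hc)),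
        Finset.card_erase_of_mem hiSu] at hcard
      have h1 : 1 ≤ Su.card := Finset.card_pos.mpr ⟨i, hiSu⟩
      omega
  · by_cases hbj : j ≤ p ∧ (q:ℕ) ≤ u j ∧ ¬ (q:ℕ) ≤ w j
    · obtain ⟨b, hib, hbj', hub, hwb⟩ := hb q hbj.2.1 hbj.2.2
      have hbSu : b ∉ Su := by rw [memSu]; push_neg; intro _; omega
      have hbSw : b ∈ Sw := by rw [memSw]; exact ⟨le_trans hbj'.le hbj.1, hwb⟩
      have hjSu : j ∈ Su := by rw [memSu]; exact ⟨hbj.1, hbj.2.1⟩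
      have hsub : insert b (Su.erase j) ⊆ Sw := by
        intro x hx
        rcases Finset.mem_insert.mp hx with rfl | hx
        · exact hbSw
        have hxj : x ≠ j := Finset.ne_of_mem_erase hx
        have hxSu : x ∈ Su := Finset.mem_of_mem_erase hx
        rw [memSu] at hxSu
        rw [memSw]
        refine ⟨hxSu.1, ?_⟩
        by_cases hxi : x = i
        · subst hxi
          by_contra hc
          exact hbi ⟨hxSu.1, hxSu.2, hc⟩
        · exact le_trans hxSu.2 (h x hxi hxj)
      have hcard := Finset.card_le_card hsub
      rw [Finset.card_insert_of_notMem (fun hc => hbSu (Finset.mem_of_mem_erase hc)),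
        Finset.card_erase_of_mem hjSu] at hcard
      have h1 : 1 ≤ Su.card := Finset.card_pos.mpr ⟨j, hjSu⟩
      omega
    · apply Finset.card_le_card
      intro x hx
      rw [memSu] at hx
      rw [memSw]
      refine ⟨hx.1, ?_⟩
      by_cases hxi : x = i
      · subst hxi; by_contra hc; exact hbi ⟨hx.1, hx.2, hc⟩
      by_cases hxj : x = j
      · subst hxj; by_contra hc; exact hbj ⟨hx.1, hx.2, hc⟩
      exact le_trans hx.2 (h x hxi hxj)


set_option maxHeartbeats 2000000

/-- For `k < i < j ≤ n-1` and
`τ = (s_{k+1} ⋯ s_{j-1}) ∘ s_k ∘ (s_{k+1} ⋯ s_{i-1}) = τ^{n,k}_{i,j}`: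
each bigrassmannian element `u_m = s_k s_{k+1} ⋯ s_m` with `i ≤ m ≤ j-1` satisfies
`u_m ≤_B s_k ∘ τ` and `¬(u_m ≤_B τ)`. -/
theorem stmt10 (n k i j : ℕ) (hn : 2 ≤ n) (hki : k < i) (hij : i < j) (hj : j < n) :
    ∀ m : ℕ, i ≤ m → m ≤ j - 1 →
      bruhatLE (ascProd n k m)
        (sT n k * (ascProd n (k + 1) (j - 1) * sT n k * ascProd n (k + 1) (i - 1))) ∧
      ¬ bruhatLE (ascProd n k m)
        (ascProd n (k + 1) (j - 1) * sT n k * ascProd n (k + 1) (i - 1)) := by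
  intro m him hmj
  have hm1 : m + 1 < n := by omega
  have hu : ∀ x : Fin n, ((ascProd n k m) x : ℕ) =
      if k ≤ (x:ℕ) ∧ (x:ℕ) ≤ m then (x:ℕ) + 1 else if (x:ℕ) = m + 1 then k else (x:ℕ) :=
    fun x => ascProd_apply n k m (by omega) hm1 x
  have hB := fun x : Fin n => ascProd_apply n (k+1) (i-1) (by omega) (by omega) x
  have hA := fun x : Fin n => ascProd_apply n (k+1) (j-1) (by omega) (by omega) x
  have hs := fun x : Fin n => sT_apply n k (by omega) x
  have hτ : ∀ x : Fin n,
      ((ascProd n (k + 1) (j - 1) * sT n k * ascProd n (k + 1) (i - 1)) x : ℕ) =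
      if (x:ℕ) = i then k else if (x:ℕ) = j then k + 1 else
      if k ≤ (x:ℕ) ∧ (x:ℕ) ≤ i - 1 then (x:ℕ) + 2 else
      if i + 1 ≤ (x:ℕ) ∧ (x:ℕ) ≤ j - 1 then (x:ℕ) + 1 else (x:ℕ) := by
    intro x
    rw [Equiv.Perm.mul_apply, Equiv.Perm.mul_apply, hA, hs, hB]
    split_ifs <;> omega
  have hw : ∀ x : Fin n,
      ((sT n k * (ascProd n (k + 1) (j - 1) * sT n k * ascProd n (k + 1) (i - 1))) x : ℕ) =
      if (x:ℕ) = i then k + 1 else if (x:ℕ) = j then k else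
      if k ≤ (x:ℕ) ∧ (x:ℕ) ≤ i - 1 then (x:ℕ) + 2 else
      if i + 1 ≤ (x:ℕ) ∧ (x:ℕ) ≤ j - 1 then (x:ℕ) + 1 else (x:ℕ) := by
    intro x
    rw [Equiv.Perm.mul_apply, hs, hτ]
    split_ifs <;> omega
  constructor
  · -- positive part
    apply bruhat_key _ _ ⟨i, by omega⟩ ⟨j, hj⟩ (by simp [Fin.lt_def]; omega)
    · intro x hxi hxj
      have hxi' : (x:ℕ) ≠ i := fun hc => hxi (Fin.ext (by simpa using hc))
      have hxj' : (x:ℕ) ≠ j := fun hc => hxj (Fin.ext (by simpa using hc))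
      rw [hu, hw]
      split_ifs <;> omega
    · intro q hq1 hq2
      rw [hu] at hq1
      rw [hw] at hq2
      simp only [Fin.val_mk] at hq1 hq2
      have hq1' : (q:ℕ) ≤ i + 1 := by split_ifs at hq1 <;> omega
      have hq2' : k + 1 < (q:ℕ) := by split_ifs at hq2 <;> omega
      refine ⟨⟨(q:ℕ) - 2, by omega⟩, by rw [Fin.lt_def]; simp only [Fin.val_mk]; omega, ?_, ?_⟩
      · rw [hu]; simp only [Fin.val_mk]; split_ifs <;> omega
      · rw [hw]; simp only [Fin.val_mk]; split_ifs <;> omega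
    · intro q hq1 hq2
      rw [hu] at hq1
      rw [hw] at hq2
      simp only [Fin.val_mk] at hq1 hq2
      have hq2' : k + 1 ≤ (q:ℕ) := by split_ifs at hq2 <;> omega
      by_cases hjm : j = m + 1
      · exfalso; split_ifs at hq1 <;> omega
      have hq1' : (q:ℕ) ≤ j := by split_ifs at hq1 <;> omega
      refine ⟨⟨max (m+1) ((q:ℕ)-1), by omega⟩,
        by rw [Fin.lt_def]; simp only [Fin.val_mk]; omega,
        by rw [Fin.lt_def]; simp only [Fin.val_mk]; omega, ?_, ?_⟩
      · rw [hu]; simp only [Fin.val_mk]; split_ifs <;> omega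
      · rw [hw]; simp only [Fin.val_mk]; split_ifs <;> omega
  · -- negative part
    intro hcon
    have := hcon ⟨m, by omega⟩ ⟨k+1, by omega⟩
    have hsub : (Finset.univ.filter (fun x : Fin n => x ≤ ⟨m, by omega⟩ ∧ (⟨k+1, by omega⟩ : Fin n) ≤ (ascProd n (k + 1) (j - 1) * sT n k * ascProd n (k + 1) (i - 1)) x)) ⊆
        (Finset.univ.filter (fun x : Fin n => x ≤ ⟨m, by omega⟩ ∧ (⟨k+1, by omega⟩ : Fin n) ≤ (ascProd n k m) x)) := by
      intro x hx
      rw [Finset.mem_filter] at hx ⊢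
      obtain ⟨-, hx1, hx2⟩ := hx
      rw [Fin.le_def] at hx1 hx2
      rw [hτ] at hx2
      simp only [Fin.val_mk] at hx1 hx2
      refine ⟨Finset.mem_univ x, by rw [Fin.le_def]; simpa using hx1, ?_⟩
      rw [Fin.le_def, hu]
      simp only [Fin.val_mk]
      split_ifs at hx2 ⊢ <;> omega
    have hmemu : (⟨i, by omega⟩ : Fin n) ∈
        (Finset.univ.filter (fun x : Fin n => x ≤ ⟨m, by omega⟩ ∧ (⟨k+1, by omega⟩ : Fin n) ≤ (ascProd n k m) x)) := by
      rw [Finset.mem_filter]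
      refine ⟨Finset.mem_univ _, by rw [Fin.le_def]; simp only [Fin.val_mk]; omega, ?_⟩
      rw [Fin.le_def, hu]
      simp only [Fin.val_mk]
      split_ifs <;> omega
    have hmemτ : (⟨i, by omega⟩ : Fin n) ∉
        (Finset.univ.filter (fun x : Fin n => x ≤ ⟨m, by omega⟩ ∧ (⟨k+1, by omega⟩ : Fin n) ≤ (ascProd n (k + 1) (j - 1) * sT n k * ascProd n (k + 1) (i - 1)) x)) := by
      rw [Finset.mem_filter]
      push_neg
      intro _ _
      rw [Fin.lt_def, hτ]
      simp only [Fin.val_mk]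
      split_ifs <;> omega
    have hlt := Finset.card_lt_card ((Finset.ssubset_iff_of_subset hsub).mpr ⟨_, hmemu, hmemτ⟩)
    omega
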